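/- For the Piola maps associated to a diffeomorphism x_K with Jacobian 𝒥, the commutation property T(div̂ V̂) = div(T^{div} V̂) holds, where T^{div}V̂ := (|𝒥|^{-1}𝒥V̂)∘x_K^{-1} and Tq̂ := (|𝒥|^{-1}q̂)∘x_K^{-1}. -/

import Mathlib

open Matrix

/-- Commutation of the Piola maps with the divergence: for an orientation-preserving
diffeomorphism `x_K : K̂ → K` (here `F` with inverse `G`) with Jacobian matrix `𝒥` and
positive Jacobian determinant, the `L²` Piola map of the master divergence of `V̂`
equals the physical divergence of the `H(div)` Piola transform
`T^{div}V̂ = (|𝒥|⁻¹ 𝒥 V̂) ∘ x_K⁻¹`. -/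
lemma piola_pi_single_sum (u : Fin 3 → ℝ) : ∑ i, u i • (Pi.single i 1 : Fin 3 → ℝ) = u := by
  funext j
  simp [Finset.sum_apply, Pi.single_apply]

lemma piola_apply_eq_sum {M : Type*} [NormedAddCommGroup M] [NormedSpace ℝ M]
    (T : (Fin 3 → ℝ) →L[ℝ] M) (u : Fin 3 → ℝ) :
    T u = ∑ i, u i • T (Pi.single i 1) := by
  conv_lhs => rw [← piola_pi_single_sum u]
  rw [map_sum]
  simp

lemma piola_sum_mul_clm (T : (Fin 3 → ℝ) →L[ℝ] ℝ) (u : Fin 3 → ℝ) :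
    ∑ i, u i * T (Pi.single i 1) = T u := by
  rw [piola_apply_eq_sum T u]
  simp

theorem piola_div_commute
    (Khat K : Set (Fin 3 → ℝ)) (hKhat : IsOpen Khat) (hK : IsOpen K)
    (F G : (Fin 3 → ℝ) → (Fin 3 → ℝ))
    (hF : Set.MapsTo F Khat K) (hG : Set.MapsTo G K Khat)
    (hGF : ∀ ξ ∈ Khat, G (F ξ) = ξ) (hFG : ∀ x ∈ K, F (G x) = x)
    (hFdiff : ContDiffOn ℝ 2 F Khat) (hGdiff : ContDiffOn ℝ 1 G K)
    (J : (Fin 3 → ℝ) → Matrix (Fin 3) (Fin 3) ℝ)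
    (hJ : ∀ ξ ∈ Khat, J ξ = Matrix.of fun i j => fderiv ℝ F ξ (Pi.single j 1) i)
    (hJpos : ∀ ξ ∈ Khat, 0 < (J ξ).det)
    (V : (Fin 3 → ℝ) → (Fin 3 → ℝ)) (hV : ContDiffOn ℝ 1 V Khat) :
    ∀ x ∈ K,
      ((J (G x)).det)⁻¹ * (∑ i, fderiv ℝ (fun ξ => V ξ i) (G x) (Pi.single i 1)) =
        ∑ i, fderiv ℝ (fun y => (((J (G y)).det)⁻¹ • (J (G y)).mulVec (V (G y))) i)
          x (Pi.single i 1) := by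
  intro x₀ hx₀
  have hξmem : G x₀ ∈ Khat := hG hx₀
  set ξ₀ := G x₀ with hξdef
  have hKn : Khat ∈ nhds ξ₀ := hKhat.mem_nhds hξmem
  have hKn' : K ∈ nhds x₀ := hK.mem_nhds hx₀
  have hFc2 : ContDiffAt ℝ 2 F ξ₀ := hFdiff.contDiffAt hKn
  have hGc1 : ContDiffAt ℝ 1 G x₀ := hGdiff.contDiffAt hKn'
  have hVc1 : ContDiffAt ℝ 1 V ξ₀ := hV.contDiffAt hKn
  have hFd : HasFDerivAt F (fderiv ℝ F ξ₀) ξ₀ :=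
    (hFc2.differentiableAt (by norm_num)).hasFDerivAt
  have hGd : HasFDerivAt G (fderiv ℝ G x₀) x₀ := (hGc1.differentiableAt one_ne_zero).hasFDerivAt
  have hVd : HasFDerivAt V (fderiv ℝ V ξ₀) ξ₀ := (hVc1.differentiableAt one_ne_zero).hasFDerivAt
  set DF := fderiv ℝ F ξ₀ with hDFdef
  set DG := fderiv ℝ G x₀ with hDGdef
  set DV := fderiv ℝ V ξ₀ with hDVdef
  have hFx : F ξ₀ = x₀ := hFG x₀ hx₀
  -- inverse relations between the differentials
  have hGFid : ∀ u, DG (DF u) = u := by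
    have h1 : HasFDerivAt (fun ξ => G (F ξ)) (DG.comp DF) ξ₀ :=
      HasFDerivAt.comp ξ₀ (hFx ▸ hGd) hFd
    have h2 : (fun ξ => G (F ξ)) =ᶠ[nhds ξ₀] id := by
      filter_upwards [hKn] with y hy; exact hGF y hy
    have h3 : DG.comp DF = ContinuousLinearMap.id ℝ (Fin 3 → ℝ) :=
      (h1.congr_of_eventuallyEq h2.symm).unique (hasFDerivAt_id ξ₀)
    intro u
    simpa using ContinuousLinearMap.ext_iff.mp h3 u
  have hFGid : ∀ u, DF (DG u) = u := by
    have h1 : HasFDerivAt (fun y => F (G y)) (DF.comp DG) x₀ := HasFDerivAt.comp x₀ hFd hGd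
    have h2 : (fun y => F (G y)) =ᶠ[nhds x₀] id := by
      filter_upwards [hKn'] with y hy; exact hFG y hy
    have h3 : DF.comp DG = ContinuousLinearMap.id ℝ (Fin 3 → ℝ) :=
      (h1.congr_of_eventuallyEq h2.symm).unique (hasFDerivAt_id x₀)
    intro u
    simpa using ContinuousLinearMap.ext_iff.mp h3 u
  -- entries of J at ξ₀
  have hJA : ∀ m n, J ξ₀ m n = DF (Pi.single n 1) m := by
    intro m n; rw [hJ ξ₀ hξmem]; rfl
  have hAmul : ∀ u, (J ξ₀).mulVec u = DF u := by
    intro u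
    funext m
    have : (J ξ₀).mulVec u m = ∑ j, u j * (((ContinuousLinearMap.proj m).comp DF)
        (Pi.single j 1)) := by
      simp [Matrix.mulVec, dotProduct, hJA, mul_comm]
    rw [this, piola_sum_mul_clm]
    rfl
  -- second derivative of F
  have hD2d : HasFDerivAt (fderiv ℝ F) (fderiv ℝ (fderiv ℝ F) ξ₀) ξ₀ := by
    have h := hFc2.fderiv_right (m := 1) (by norm_num)
    exact (h.differentiableAt one_ne_zero).hasFDerivAt
  set H2 := fderiv ℝ (fderiv ℝ F) ξ₀ with hH2def
  have hsymm : ∀ u v, H2 u v = H2 v u := fun u v => hFc2.isSymmSndFDerivAt (by norm_num) u v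
  -- derivative of the entries of J
  set Lent : Fin 3 → Fin 3 → ((Fin 3 → ℝ) →L[ℝ] ℝ) := fun m n =>
    ((ContinuousLinearMap.proj m).comp
      (ContinuousLinearMap.apply ℝ (Fin 3 → ℝ) (Pi.single n 1))).comp H2 with hLentdef
  have hLentapp : ∀ m n v, Lent m n v = H2 v (Pi.single n 1) m := fun _ _ _ => rfl
  have hent : ∀ m n, HasFDerivAt (fun ξ => J ξ m n) (Lent m n) ξ₀ := by
    intro m n
    have hc := (((ContinuousLinearMap.proj (R := ℝ) (φ := fun _ : Fin 3 => ℝ) m)).comp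
        (ContinuousLinearMap.apply ℝ (Fin 3 → ℝ) (Pi.single n 1))).hasFDerivAt
        (x := fderiv ℝ F ξ₀)
    have h1 : HasFDerivAt (fun ξ => fderiv ℝ F ξ (Pi.single n 1) m) (Lent m n) ξ₀ :=
      hc.comp ξ₀ hD2d
    apply h1.congr_of_eventuallyEq
    filter_upwards [hKn] with y hy
    rw [hJ y hy]; rfl
  -- the matrix identity A * g = 1
  have hAg : J ξ₀ * Matrix.of (fun m n => DG (Pi.single n 1) m) = 1 := by
    ext m n
    rw [Matrix.mul_apply]
    calc ∑ k, J ξ₀ m k * Matrix.of (fun m n => DG (Pi.single n 1) m) k n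
        = ∑ k, DG (Pi.single n 1) k * ((ContinuousLinearMap.proj m).comp DF) (Pi.single k 1) := by
          refine Finset.sum_congr rfl fun k _ => ?_
          rw [hJA]
          simp [mul_comm]
      _ = ((ContinuousLinearMap.proj m).comp DF) (DG (Pi.single n 1)) := piola_sum_mul_clm _ _
      _ = (1 : Matrix (Fin 3) (Fin 3) ℝ) m n := by
          simp [hFGid, Matrix.one_apply, Pi.single_apply]
  have hadj : (J ξ₀).adjugate = (J ξ₀).det • Matrix.of (fun m n => DG (Pi.single n 1) m) := by
    have h1 : (J ξ₀).adjugate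
        = (J ξ₀).adjugate * (J ξ₀ * Matrix.of fun m n => DG (Pi.single n 1) m) := by
      rw [hAg, Matrix.mul_one]
    rw [h1, ← Matrix.mul_assoc, Matrix.adjugate_mul, Matrix.smul_mul, Matrix.one_mul]
  -- derivative of the determinant of J
  have hdet0 := (((((((hent 0 0).mul (hent 1 1)).mul (hent 2 2)).sub
      (((hent 0 0).mul (hent 1 2)).mul (hent 2 1))).sub
      (((hent 0 1).mul (hent 1 0)).mul (hent 2 2))).add
      (((hent 0 1).mul (hent 1 2)).mul (hent 2 0))).add
      (((hent 0 2).mul (hent 1 0)).mul (hent 2 1))).sub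
      (((hent 0 2).mul (hent 1 1)).mul (hent 2 0))
  have hdetfun : (fun ξ => (J ξ).det) = (fun ξ =>
      J ξ 0 0 * J ξ 1 1 * J ξ 2 2 - J ξ 0 0 * J ξ 1 2 * J ξ 2 1
      - J ξ 0 1 * J ξ 1 0 * J ξ 2 2 + J ξ 0 1 * J ξ 1 2 * J ξ 2 0
      + J ξ 0 2 * J ξ 1 0 * J ξ 2 1 - J ξ 0 2 * J ξ 1 1 * J ξ 2 0) :=
    funext fun ξ => Matrix.det_fin_three (J ξ)
  have hdet := hdet0.congr_of_eventuallyEq (Filter.EventuallyEq.of_eq hdetfun)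
  have hLdapp : ∀ v, fderiv ℝ (fun ξ => (J ξ).det) ξ₀ v
      = ∑ m, ∑ n, (J ξ₀).adjugate m n * H2 v (Pi.single m 1) n := by
    intro v
    rw [hdet.fderiv]
    simp only [ContinuousLinearMap.add_apply, ContinuousLinearMap.coe_sub', Pi.sub_apply,
      ContinuousLinearMap.coe_smul', Pi.smul_apply, smul_eq_mul, hLentapp,
      ContinuousLinearMap.smul_apply, ContinuousLinearMap.sub_apply, Pi.mul_apply]
    rw [Matrix.adjugate_fin_three]
    simp only [Fin.sum_univ_three, Matrix.cons_val', Matrix.cons_val_zero, Matrix.cons_val_one,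
      Matrix.head_cons, Matrix.empty_val', Matrix.cons_val_fin_one, Matrix.head_fin_const,
      Matrix.cons_val_two, Matrix.tail_cons, Matrix.of_apply]
    ring
  have hDne : (J ξ₀).det ≠ 0 := ne_of_gt (hJpos ξ₀ hξmem)
  have hLd : ∀ v, fderiv ℝ (fun ξ => (J ξ).det) ξ₀ v
      = (J ξ₀).det * ∑ m, ∑ n, DG (Pi.single n 1) m * H2 v (Pi.single m 1) n := by
    intro v
    rw [hLdapp v, hadj, Finset.mul_sum]
    refine Finset.sum_congr rfl fun m _ => ?_
    rw [Finset.mul_sum]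
    refine Finset.sum_congr rfl fun n _ => ?_
    simp [Matrix.smul_apply, Matrix.of_apply, mul_assoc]
  have hdet' : HasFDerivAt (fun ξ => (J ξ).det) (fderiv ℝ (fun ξ => (J ξ).det) ξ₀) ξ₀ :=
    hdet.differentiableAt.hasFDerivAt
  -- derivative of the components of the transformed field, upstairs
  have hVj : ∀ j : Fin 3, HasFDerivAt (fun ξ => V ξ j)
      ((ContinuousLinearMap.proj j).comp DV) ξ₀ := by
    intro j
    exact (ContinuousLinearMap.proj (R := ℝ) (φ := fun _ : Fin 3 => ℝ) j).hasFDerivAt.comp ξ₀ hVd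
  have hmv : ∀ i : Fin 3, HasFDerivAt (fun ξ => (J ξ).mulVec (V ξ) i)
      (∑ j, (J ξ₀ i j • ((ContinuousLinearMap.proj j).comp DV) + V ξ₀ j • Lent i j)) ξ₀ := by
    intro i
    have h1 := HasFDerivAt.sum (u := Finset.univ) (A := fun j ξ => J ξ i j * V ξ j)
      (A' := fun j => J ξ₀ i j • ((ContinuousLinearMap.proj j).comp DV) + V ξ₀ j • Lent i j)
      (fun j _ => (hent i j).mul (hVj j))
    apply h1.congr_of_eventuallyEq
    refine Filter.EventuallyEq.of_eq (funext fun ξ => ?_)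
    simp [Matrix.mulVec, dotProduct]
  have hinv : HasFDerivAt (fun ξ => ((J ξ).det)⁻¹)
      ((-(((J ξ₀).det) ^ 2)⁻¹) • fderiv ℝ (fun ξ => (J ξ).det) ξ₀) ξ₀ :=
    (hasDerivAt_inv hDne).comp_hasFDerivAt ξ₀ hdet'
  have hφ : ∀ i : Fin 3, HasFDerivAt (fun ξ => ((J ξ).det)⁻¹ * (J ξ).mulVec (V ξ) i)
      ((((J ξ₀).det)⁻¹ •
          ∑ j, (J ξ₀ i j • ((ContinuousLinearMap.proj j).comp DV) + V ξ₀ j • Lent i j))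
        + ((J ξ₀).mulVec (V ξ₀) i) •
            ((-(((J ξ₀).det) ^ 2)⁻¹) • fderiv ℝ (fun ξ => (J ξ).det) ξ₀)) ξ₀ :=
    fun i => hinv.mul (hmv i)
  have hfd : ∀ i : Fin 3,
      fderiv ℝ (fun y => (((J (G y)).det)⁻¹ • (J (G y)).mulVec (V (G y))) i) x₀
        = ((((J ξ₀).det)⁻¹ •
            ∑ j, (J ξ₀ i j • ((ContinuousLinearMap.proj j).comp DV) + V ξ₀ j • Lent i j))
          + ((J ξ₀).mulVec (V ξ₀) i) •
              ((-(((J ξ₀).det) ^ 2)⁻¹) • fderiv ℝ (fun ξ => (J ξ).det) ξ₀)).comp DG := by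
    intro i
    have hcomp := (hφ i).comp x₀ hGd
    exact hcomp.fderiv
  have hVi : ∀ i : Fin 3, fderiv ℝ (fun ξ => V ξ i) ξ₀ = (ContinuousLinearMap.proj i).comp DV :=
    fun i => (hVj i).fderiv
  simp only [hfd, hVi]
  simp only [ContinuousLinearMap.comp_apply, ContinuousLinearMap.add_apply,
    ContinuousLinearMap.coe_smul', Pi.smul_apply, ContinuousLinearMap.sum_apply,
    ContinuousLinearMap.smul_apply, smul_eq_mul, ContinuousLinearMap.proj_apply, hLentapp, hLd]
  have key3 : ∑ i : Fin 3, ∑ j : Fin 3, J ξ₀ i j * DV (DG (Pi.single i 1)) j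
      = ∑ i : Fin 3, DV (Pi.single i 1) i := by
    rw [Finset.sum_comm]
    refine Finset.sum_congr rfl fun j _ => ?_
    calc ∑ i : Fin 3, J ξ₀ i j * DV (DG (Pi.single i 1)) j
        = ∑ i : Fin 3, DF (Pi.single j 1) i *
            (((ContinuousLinearMap.proj j).comp (DV.comp DG)) (Pi.single i 1)) := by
          refine Finset.sum_congr rfl fun i _ => ?_
          rw [hJA]
          rfl
      _ = ((ContinuousLinearMap.proj j).comp (DV.comp DG)) (DF (Pi.single j 1)) :=
          piola_sum_mul_clm _ _
      _ = DV (Pi.single j 1) j := by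
          show DV (DG (DF (Pi.single j 1))) j = _
          rw [hGFid]
  have key2 : ∑ i : Fin 3, ∑ j : Fin 3, V ξ₀ j * H2 (DG (Pi.single i 1)) (Pi.single j 1) i
      = ∑ m : Fin 3, ∑ n : Fin 3, DG (Pi.single n 1) m * H2 (V ξ₀) (Pi.single m 1) n := by
    have h1 : ∀ i : Fin 3, ∑ j : Fin 3, V ξ₀ j * H2 (DG (Pi.single i 1)) (Pi.single j 1) i
        = ∑ m : Fin 3, DG (Pi.single i 1) m * H2 (V ξ₀) (Pi.single m 1) i := by
      intro i
      have h2 := piola_sum_mul_clm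
        ((ContinuousLinearMap.proj i).comp (H2 (DG (Pi.single i 1)))) (V ξ₀)
      rw [show ∑ j : Fin 3, V ξ₀ j * H2 (DG (Pi.single i 1)) (Pi.single j 1) i
          = ((ContinuousLinearMap.proj i).comp (H2 (DG (Pi.single i 1)))) (V ξ₀) from h2]
      show H2 (DG (Pi.single i 1)) (V ξ₀) i = _
      rw [hsymm]
      exact (piola_sum_mul_clm ((ContinuousLinearMap.proj i).comp (H2 (V ξ₀)))
        (DG (Pi.single i 1))).symm
    rw [Finset.sum_congr rfl fun i _ => h1 i, Finset.sum_comm]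
  have key1 : ∑ i : Fin 3, (J ξ₀ *ᵥ V ξ₀) i *
        ∑ m : Fin 3, ∑ n : Fin 3, DG (Pi.single n 1) m *
          H2 (DG (Pi.single i 1)) (Pi.single m 1) n
      = ∑ m : Fin 3, ∑ n : Fin 3, DG (Pi.single n 1) m * H2 (V ξ₀) (Pi.single m 1) n := by
    have h1 : ∀ m n : Fin 3,
        ∑ i : Fin 3, (J ξ₀ *ᵥ V ξ₀) i * H2 (DG (Pi.single i 1)) (Pi.single m 1) n
          = H2 (V ξ₀) (Pi.single m 1) n := by
      intro m n
      calc ∑ i : Fin 3, (J ξ₀ *ᵥ V ξ₀) i * H2 (DG (Pi.single i 1)) (Pi.single m 1) n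
          = ∑ i : Fin 3, DF (V ξ₀) i * ((Lent n m).comp DG) (Pi.single i 1) := by
            rw [hAmul]
            rfl
        _ = ((Lent n m).comp DG) (DF (V ξ₀)) := piola_sum_mul_clm _ _
        _ = H2 (V ξ₀) (Pi.single m 1) n := by
            show H2 (DG (DF (V ξ₀))) (Pi.single m 1) n = _
            rw [hGFid]
    calc ∑ i : Fin 3, (J ξ₀ *ᵥ V ξ₀) i *
          ∑ m : Fin 3, ∑ n : Fin 3, DG (Pi.single n 1) m *
            H2 (DG (Pi.single i 1)) (Pi.single m 1) n
        = ∑ m : Fin 3, ∑ n : Fin 3, DG (Pi.single n 1) m *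
            ∑ i : Fin 3, (J ξ₀ *ᵥ V ξ₀) i * H2 (DG (Pi.single i 1)) (Pi.single m 1) n := by
          simp only [Finset.mul_sum]
          rw [Finset.sum_comm]
          refine Finset.sum_congr rfl fun m _ => ?_
          rw [Finset.sum_comm]
          refine Finset.sum_congr rfl fun n _ => ?_
          refine Finset.sum_congr rfl fun i _ => by ring
      _ = ∑ m : Fin 3, ∑ n : Fin 3, DG (Pi.single n 1) m * H2 (V ξ₀) (Pi.single m 1) n := by
          refine Finset.sum_congr rfl fun m _ => Finset.sum_congr rfl fun n _ => ?_
          rw [h1]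
  have hc : -(((J ξ₀).det) ^ 2)⁻¹ * (J ξ₀).det = -((J ξ₀).det)⁻¹ := by
    rw [sq, mul_inv, neg_mul, mul_assoc, inv_mul_cancel₀ hDne, mul_one]
  have hsplit : ∀ i : Fin 3,
      (J ξ₀).det⁻¹ * ∑ j : Fin 3, (J ξ₀ i j * DV (DG (Pi.single i 1)) j
          + V ξ₀ j * H2 (DG (Pi.single i 1)) (Pi.single j 1) i)
        + (J ξ₀ *ᵥ V ξ₀) i * (-((J ξ₀).det ^ 2)⁻¹ * ((J ξ₀).det *
            ∑ m : Fin 3, ∑ n : Fin 3, DG (Pi.single n 1) m *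
              H2 (DG (Pi.single i 1)) (Pi.single m 1) n))
      = (J ξ₀).det⁻¹ * (∑ j : Fin 3, J ξ₀ i j * DV (DG (Pi.single i 1)) j)
        + (J ξ₀).det⁻¹ * (∑ j : Fin 3, V ξ₀ j * H2 (DG (Pi.single i 1)) (Pi.single j 1) i)
        - (J ξ₀).det⁻¹ * ((J ξ₀ *ᵥ V ξ₀) i *
            ∑ m : Fin 3, ∑ n : Fin 3, DG (Pi.single n 1) m *
              H2 (DG (Pi.single i 1)) (Pi.single m 1) n) := by
    intro i
    rw [Finset.sum_add_distrib]
    rw [show -((J ξ₀).det ^ 2)⁻¹ * ((J ξ₀).det *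
        ∑ m : Fin 3, ∑ n : Fin 3, DG (Pi.single n 1) m *
          H2 (DG (Pi.single i 1)) (Pi.single m 1) n)
      = -(((J ξ₀).det)⁻¹ * ∑ m : Fin 3, ∑ n : Fin 3, DG (Pi.single n 1) m *
          H2 (DG (Pi.single i 1)) (Pi.single m 1) n) from by rw [← mul_assoc, hc]; ring]
    ring
  rw [Finset.sum_congr rfl fun i _ => hsplit i]
  rw [Finset.sum_sub_distrib, Finset.sum_add_distrib, ← Finset.mul_sum, ← Finset.mul_sum,
    ← Finset.mul_sum]
  rw [key3, key2, key1]
  ring
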